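/- Fix real numbers σ > 0, a > 0, x₀ and T, and define K : ℝ × ℝ → ℝ by K(t,x) = (x − x₀)² + σ²(T − t). Then for every t and every x < x₀, the greatest element of the set { ∂K/∂t(t,x) − u² · ∂K/∂x(t,x) + (σ²/2) · ∂²K/∂x²(t,x) : u ∈ [−a,a] } is 2a²(x₀ − x), it is attained at u = a, and 2a²(x₀ − x) > 0. In particular the supremum is nonzero, so K fails to satisfy the Hamilton–Jacobi–Bellman equation sup_{u ∈ [−a,a]} { ∂K/∂t − u² ∂K/∂x + (σ²/2) ∂²K/∂x² } = 0 at every point (t,x) with x < x₀. -/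
import Mathlib

lemma d1 (c b : ℝ) (t : ℝ) : deriv (fun s : ℝ => c + b * (- s)) t = -b := by
  have : (fun s : ℝ => c + b * (-s)) = fun s => c + (-b) * s := by
    funext s; ring
  rw [this]
  simpa using (((hasDerivAt_id t).const_mul (-b)).const_add c).deriv

lemma dx (x₀ c x : ℝ) : deriv (fun z : ℝ => (z - x₀) ^ 2 + c) x = 2 * (x - x₀) := by
  have h : HasDerivAt (fun z : ℝ => (z - x₀) ^ 2 + c) (2 * (x - x₀)) x := by
    have h1 : HasDerivAt (fun z : ℝ => z - x₀) 1 x := (hasDerivAt_id x).sub_const x₀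
    have h2 := (h1.pow 2).add_const c
    simpa using h2
  exact h.deriv

/-- The candidate value function K of the time-consistent regulator fails the
standard HJB equation: for x < x₀ the supremum of the Hamiltonian over
u ∈ [-a,a] equals 2a²(x₀-x) > 0, attained at u = a, and is not 0. -/
theorem stmt_4 (σ a x₀ T : ℝ) (hσ : 0 < σ) (ha : 0 < a)
    (K : ℝ → ℝ → ℝ) (hK : ∀ t x, K t x = (x - x₀) ^ 2 + σ ^ 2 * (T - t)) :
    ∀ t x : ℝ, x < x₀ →
      IsGreatest {r : ℝ | ∃ u ∈ Set.Icc (-a) a,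
        r = deriv (fun s => K s x) t - u ^ 2 * deriv (fun z => K t z) x
          + σ ^ 2 / 2 * deriv (deriv (fun z => K t z)) x} (2 * a ^ 2 * (x₀ - x)) ∧
      (deriv (fun s => K s x) t - a ^ 2 * deriv (fun z => K t z) x
          + σ ^ 2 / 2 * deriv (deriv (fun z => K t z)) x = 2 * a ^ 2 * (x₀ - x)) ∧
      0 < 2 * a ^ 2 * (x₀ - x) ∧
      ¬ IsGreatest {r : ℝ | ∃ u ∈ Set.Icc (-a) a,
        r = deriv (fun s => K s x) t - u ^ 2 * deriv (fun z => K t z) x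
          + σ ^ 2 / 2 * deriv (deriv (fun z => K t z)) x} 0 := by
  intro t x hx
  have ht : deriv (fun s => K s x) t = -σ ^ 2 := by
    have : (fun s => K s x) = fun s => ((x - x₀) ^ 2 + σ ^ 2 * T) + σ ^ 2 * (-s) := by
      funext s; rw [hK]; ring
    rw [this, d1]
  have hfx : (fun z => K t z) = fun z => (z - x₀) ^ 2 + σ ^ 2 * (T - t) := by
    funext z; rw [hK]
  have hx1 : deriv (fun z => K t z) x = 2 * (x - x₀) := by rw [hfx, dx]
  have hx2 : deriv (deriv (fun z => K t z)) x = 2 := by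
    rw [hfx]
    have : deriv (fun z : ℝ => (z - x₀) ^ 2 + σ ^ 2 * (T - t)) = fun z => 2 * z + (-(2*x₀)) := by
      funext z; rw [dx]; ring
    rw [this]
    simpa using (((hasDerivAt_id x).const_mul 2).add_const (-(2*x₀))).deriv
  have hd : 0 < x₀ - x := by linarith
  have hpos : 0 < 2 * a ^ 2 * (x₀ - x) := by positivity
  have hval : ∀ u : ℝ, deriv (fun s => K s x) t - u ^ 2 * deriv (fun z => K t z) x
      + σ ^ 2 / 2 * deriv (deriv (fun z => K t z)) x = 2 * u ^ 2 * (x₀ - x) := by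
    intro u; rw [ht, hx1, hx2]; ring
  have hmem : (2 * a ^ 2 * (x₀ - x)) ∈ {r : ℝ | ∃ u ∈ Set.Icc (-a) a,
        r = deriv (fun s => K s x) t - u ^ 2 * deriv (fun z => K t z) x
          + σ ^ 2 / 2 * deriv (deriv (fun z => K t z)) x} := by
    exact ⟨a, ⟨by linarith, le_refl a⟩, (hval a).symm⟩
  have hub : ∀ r ∈ {r : ℝ | ∃ u ∈ Set.Icc (-a) a,
        r = deriv (fun s => K s x) t - u ^ 2 * deriv (fun z => K t z) x
          + σ ^ 2 / 2 * deriv (deriv (fun z => K t z)) x}, r ≤ 2 * a ^ 2 * (x₀ - x) := by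
    rintro r ⟨u, ⟨hu1, hu2⟩, rfl⟩
    rw [hval]
    have : u ^ 2 ≤ a ^ 2 := sq_le_sq' hu1 hu2
    nlinarith
  refine ⟨⟨hmem, hub⟩, hval a, hpos, ?_⟩
  rintro ⟨_, hub0⟩
  exact absurd (hub0 hmem) (by push_neg; linarith)
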